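/- Let Ω ⊆ ℝ be a measurable set, let I ⊆ Ω be a measurable subset, let ξ ∈ ℂ, and let f : ℝⁿ → ℂ be a function that is symmetric under every permutation of its n arguments and integrable on Ωⁿ. For z = (z₁,…,zₙ) let σ_I(z) denote the number of indices i with zᵢ ∈ I. Then ∫_{Ωⁿ} ξ^{σ_I(z)} f(z₁,…,zₙ) dz₁⋯dzₙ = Σ_{j=0}^{n} C(n,j) (ξ−1)^j ∫_I dz₁ ⋯ ∫_I dz_j ∫_Ω dz_{j+1} ⋯ ∫_Ω dzₙ f(z₁,…,zₙ), where C(n,j) is the binomial coefficient. -/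

import Mathlib

open MeasureTheory

private lemma exists_perm_mem_iff {n : ℕ} (S T : Finset (Fin n)) (h : S.card = T.card) :
    ∃ σ : Equiv.Perm (Fin n), ∀ x, σ x ∈ S ↔ x ∈ T := by
  classical
  have hc : Tᶜ.card = Sᶜ.card := by simp [Finset.card_compl, h]
  let e₁ : {x // x ∈ T} ≃ {x // x ∈ S} := Finset.equivOfCardEq h.symm
  let e₂ : {x // ¬ x ∈ T} ≃ {x // ¬ x ∈ S} :=
    (Equiv.subtypeEquivRight fun x => (Finset.mem_compl (s := T)).symm).trans
      ((Finset.equivOfCardEq hc).trans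
        (Equiv.subtypeEquivRight fun x => Finset.mem_compl (s := S)))
  refine ⟨Equiv.subtypeCongr e₁ e₂, fun x => ?_⟩
  by_cases hx : x ∈ T
  · simp only [Equiv.subtypeCongr, Equiv.trans_apply,
      Equiv.sumCompl_symm_apply_of_pos hx, Equiv.sumCongr_apply, Sum.map_inl,
      Equiv.sumCompl_apply_inl]
    exact iff_of_true (e₁ ⟨x, hx⟩).2 hx
  · simp only [Equiv.subtypeCongr, Equiv.trans_apply,
      Equiv.sumCompl_symm_apply_of_neg hx, Equiv.sumCongr_apply, Sum.map_inr,
      Equiv.sumCompl_apply_inr]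
    exact iff_of_false (e₂ ⟨x, hx⟩).2 hx

private lemma piCongrLeft_eq_comp {n : ℕ} (e : Equiv.Perm (Fin n)) (z : Fin n → ℝ) :
    (Equiv.piCongrLeft (fun _ => ℝ) e) z = z ∘ ⇑e.symm := by
  funext b
  have := Equiv.piCongrLeft_apply_apply (fun _ => ℝ) e z (e.symm b)
  rwa [Equiv.apply_symm_apply] at this

private lemma integral_perm_congr {n : ℕ} (Ω I : Set ℝ) (f : (Fin n → ℝ) → ℂ)
    (hsym : ∀ (σ : Equiv.Perm (Fin n)) (z : Fin n → ℝ), f (z ∘ σ) = f z)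
    (S T : Finset (Fin n)) (h : S.card = T.card) :
    ∫ z in Set.univ.pi (fun i => if i ∈ S then I else Ω), f z
      = ∫ z in Set.univ.pi (fun i => if i ∈ T then I else Ω), f z := by
  classical
  obtain ⟨σ, hσ⟩ := exists_perm_mem_iff S T h
  set φ := MeasurableEquiv.piCongrLeft (fun _ : Fin n => ℝ) σ with hφdef
  have hmp : MeasurePreserving φ volume volume :=
    volume_measurePreserving_piCongrLeft _ σ
  have hφ : ∀ z : Fin n → ℝ, φ z = z ∘ ⇑σ.symm := fun z => by
    rw [hφdef, MeasurableEquiv.coe_piCongrLeft]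
    exact piCongrLeft_eq_comp σ z
  have key := hmp.setIntegral_preimage_emb φ.measurableEmbedding f
    (Set.univ.pi (fun i => if i ∈ S then I else Ω))
  have h1 : ∀ z, f (φ z) = f z := fun z => by rw [hφ, hsym σ.symm z]
  have h2 : φ ⁻¹' (Set.univ.pi (fun i => if i ∈ S then I else Ω))
      = Set.univ.pi (fun i => if i ∈ T then I else Ω) := by
    ext z
    simp only [Set.mem_preimage, Set.mem_pi, Set.mem_univ, forall_true_left, hφ,
      Function.comp_apply]
    constructor
    · intro hz k
      have hzk := hz (σ k)
      rw [Equiv.symm_apply_apply] at hzk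
      rwa [if_congr (hσ k) rfl rfl] at hzk
    · intro hz i
      have hzi := hz (σ.symm i)
      have hcond : (σ.symm i ∈ T) ↔ (i ∈ S) := by
        rw [← hσ (σ.symm i), Equiv.apply_symm_apply]
      rwa [if_congr hcond rfl rfl] at hzi
  rw [h2] at key
  simp only [h1] at key
  exact key.symm

private lemma card_filter_lt {n j : ℕ} (hj : j ≤ n) :
    (Finset.univ.filter fun i : Fin n => (i : ℕ) < j).card = j := by
  classical
  have heq : (Finset.univ.filter fun i : Fin n => (i : ℕ) < j)
      = Finset.map (Fin.castLEEmb hj) Finset.univ := by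
    ext i
    simp only [Finset.mem_filter, Finset.mem_univ, true_and, Finset.mem_map]
    constructor
    · intro h
      exact ⟨⟨(i : ℕ), h⟩, rfl⟩
    · rintro ⟨k, rfl⟩
      simp [Fin.castLEEmb]
  rw [heq, Finset.card_map, Finset.card_univ, Fintype.card_fin]

private lemma pointwise_expansion {n : ℕ} (I : Set ℝ) (ξ : ℂ) (f : (Fin n → ℝ) → ℂ)
    (z : Fin n → ℝ) :
    ξ ^ (Set.ncard {i : Fin n | z i ∈ I}) * f z
      = ∑ S ∈ (Finset.univ : Finset (Fin n)).powerset,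
          (ξ - 1) ^ S.card * Set.indicator ((S : Set (Fin n)).pi fun _ => I) f z := by
  classical
  have hn : Set.ncard {i : Fin n | z i ∈ I}
      = (Finset.univ.filter fun i => z i ∈ I).card := by
    rw [Set.ncard_eq_toFinset_card']
    congr 1
    ext i
    simp
  have h1 : ∏ i : Fin n, ((ξ - 1) * (if z i ∈ I then (1 : ℂ) else 0) + 1)
      = ξ ^ (Set.ncard {i : Fin n | z i ∈ I}) := by
    calc ∏ i : Fin n, ((ξ - 1) * (if z i ∈ I then (1 : ℂ) else 0) + 1)
        = ∏ i : Fin n, (if z i ∈ I then ξ else 1) := by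
          refine Finset.prod_congr rfl fun i _ => ?_
          split_ifs <;> ring
      _ = ξ ^ (Finset.univ.filter fun i => z i ∈ I).card := by
          rw [Finset.prod_ite, Finset.prod_const, Finset.prod_const_one, mul_one]
      _ = _ := by rw [hn]
  rw [← h1, Finset.prod_add, Finset.sum_mul]
  refine Finset.sum_congr rfl fun S _ => ?_
  rw [Finset.prod_const_one, mul_one, Finset.prod_mul_distrib, Finset.prod_const]
  by_cases hall : ∀ i ∈ S, z i ∈ I
  · have hp : ∏ i ∈ S, (if z i ∈ I then (1 : ℂ) else 0) = 1 :=
      Finset.prod_eq_one fun i hi => if_pos (hall i hi)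
    have hmem : z ∈ (S : Set (Fin n)).pi fun _ => I := fun i hi => hall i hi
    rw [hp, mul_one, Set.indicator_of_mem hmem]
  · push_neg at hall
    obtain ⟨i, hi, hzi⟩ := hall
    have hp : ∏ i ∈ S, (if z i ∈ I then (1 : ℂ) else 0) = 0 :=
      Finset.prod_eq_zero hi (if_neg hzi)
    have hmem : z ∉ (S : Set (Fin n)).pi fun _ => I := fun hmem => hzi (hmem i hi)
    rw [hp, mul_zero, zero_mul, Set.indicator_of_notMem hmem, mul_zero]

/-- Lemma 1 of the paper: for a symmetric integrable function `f` on `Ωⁿ`,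
`∫_{Ωⁿ} ξ^{σ_I(z)} f(z) dz = Σ_{j=0}^{n} C(n,j) (ξ−1)^j ∫_{Iʲ×Ω^{n-j}} f(z) dz`,
where `σ_I(z)` counts the coordinates of `z` lying in `I ⊆ Ω`. -/
theorem symmetric_integral_binomial_expansion
    (n : ℕ) (Ω I : Set ℝ) (hΩ : MeasurableSet Ω) (hI : MeasurableSet I) (hIΩ : I ⊆ Ω)
    (ξ : ℂ) (f : (Fin n → ℝ) → ℂ)
    (hsym : ∀ (σ : Equiv.Perm (Fin n)) (z : Fin n → ℝ), f (z ∘ σ) = f z)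
    (hint : IntegrableOn f (Set.univ.pi fun _ : Fin n => Ω)) :
    ∫ z in Set.univ.pi (fun _ : Fin n => Ω),
        ξ ^ (Set.ncard {i : Fin n | z i ∈ I}) * f z
      = ∑ j ∈ Finset.range (n + 1), (n.choose j : ℂ) * (ξ - 1) ^ j *
          ∫ z in Set.univ.pi (fun i : Fin n => if (i : ℕ) < j then I else Ω), f z := by
  classical
  set A := Set.univ.pi (fun _ : Fin n => Ω) with hA
  have hAmeas : MeasurableSet A := MeasurableSet.univ_pi fun _ => hΩ
  -- the `T S` sets
  set T : Finset (Fin n) → Set (Fin n → ℝ) :=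
    fun S => (S : Set (Fin n)).pi fun _ => I with hT
  have hTmeas : ∀ S, MeasurableSet (T S) := fun S =>
    MeasurableSet.pi (Set.to_countable _) fun _ _ => hI
  have hinter : ∀ S : Finset (Fin n),
      A ∩ T S = Set.univ.pi (fun i => if i ∈ S then I else Ω) := by
    intro S
    ext z
    simp only [hA, hT, Set.mem_inter_iff, Set.mem_pi, Set.mem_univ, forall_true_left,
      Finset.coe_sort_coe, Finset.mem_coe]
    constructor
    · rintro ⟨hz1, hz2⟩ i
      by_cases hi : i ∈ S
      · simpa [hi] using hz2 i hi
      · simpa [hi] using hz1 i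
    · intro hz
      constructor
      · intro i
        by_cases hi : i ∈ S
        · exact hIΩ (by simpa [hi] using hz i)
        · simpa [hi] using hz i
      · intro i hi
        simpa [hi] using hz i
  -- integrability of each summand
  have hintS : ∀ S : Finset (Fin n),
      Integrable (fun z => (ξ - 1) ^ S.card * Set.indicator (T S) f z)
        (volume.restrict A) := by
    intro S
    refine Integrable.const_mul ?_ _
    rw [integrable_indicator_iff (hTmeas S)]
    have : IntegrableOn f (T S ∩ A) := hint.mono_set Set.inter_subset_right
    rwa [IntegrableOn, Measure.restrict_restrict (hTmeas S)]
  -- expand the integrand pointwise and exchange sum and integral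
  have step1 : ∫ z in A, ξ ^ (Set.ncard {i : Fin n | z i ∈ I}) * f z
      = ∑ S ∈ (Finset.univ : Finset (Fin n)).powerset,
          (ξ - 1) ^ S.card * ∫ z in Set.univ.pi (fun i => if i ∈ S then I else Ω), f z := by
    rw [show (fun z => ξ ^ (Set.ncard {i : Fin n | z i ∈ I}) * f z)
        = fun z => ∑ S ∈ (Finset.univ : Finset (Fin n)).powerset,
            (ξ - 1) ^ S.card * Set.indicator (T S) f z from
      funext fun z => pointwise_expansion I ξ f z]
    rw [integral_finset_sum _ fun S _ => hintS S]
    refine Finset.sum_congr rfl fun S _ => ?_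
    rw [MeasureTheory.integral_const_mul, setIntegral_indicator (hTmeas S), hinter S]
  rw [step1]
  -- replace each subset's integral by the canonical one of the same cardinality
  have hcanon : ∀ S : Finset (Fin n),
      S ∈ (Finset.univ : Finset (Fin n)).powerset →
      ∫ z in Set.univ.pi (fun i => if i ∈ S then I else Ω), f z
        = ∫ z in Set.univ.pi (fun i : Fin n => if (i : ℕ) < S.card then I else Ω), f z := by
    intro S _
    have hle : S.card ≤ n := by
      simpa using Finset.card_le_card (Finset.subset_univ S)
    have hcard : S.card = (Finset.univ.filter fun i : Fin n => (i : ℕ) < S.card).card :=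
      (card_filter_lt hle).symm
    have := integral_perm_congr Ω I f hsym S
      (Finset.univ.filter fun i : Fin n => (i : ℕ) < S.card) hcard
    rw [this]
    congr 1
    ext z
    simp [Set.mem_pi]
  rw [Finset.sum_congr rfl fun S hS => by rw [hcanon S hS]]
  -- group subsets by cardinality
  rw [Finset.powerset_card_disjiUnion]
  erw [Finset.sum_disjiUnion]
  rw [Finset.card_univ, Fintype.card_fin]
  refine Finset.sum_congr rfl fun j hj => ?_
  have hcardj : ∀ S ∈ Finset.powersetCard j (Finset.univ : Finset (Fin n)), S.card = j :=
    fun S hS => (Finset.mem_powersetCard.mp hS).2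
  rw [Finset.sum_congr rfl fun S hS => by rw [hcardj S hS]]
  rw [Finset.sum_const, Finset.card_powersetCard, Finset.card_univ, Fintype.card_fin,
    nsmul_eq_mul]
  ring
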